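/- Let p, q, q' be real numbers with 0 < p < 1/2 and 1 - p ≤ q' < q < 1. Then 1 ≤ FPR_s(p,q)/FPR_r(p,q) and this ratio is increasing in q, i.e., FPR_s(p,q')/FPR_r(p,q') ≤ FPR_s(p,q)/FPR_r(p,q); furthermore FNR_s(p,q)/FNR_r(p,q) = (1 - 2·p)/(q - p), which satisfies (1 - 2·p)/(1 - p) ≤ FNR_s(p,q)/FNR_r(p,q) ≤ 1 and is decreasing in q, i.e., FNR_s(p,q)/FNR_r(p,q) ≤ FNR_s(p,q')/FNR_r(p,q'). -/

import Mathlib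

/-- The revealing school's false positive rate. -/
noncomputable def FPR_r (p q : ℝ) : ℝ := 1 - q

/-- The revealing school's false negative rate. -/
noncomputable def FNR_r (p q : ℝ) : ℝ := 1 - q

/-- The strategic school's false positive rate. -/
noncomputable def FPR_s (p q : ℝ) : ℝ := 1 - q + q * (p + q - 1) / (q - p)

/-- The strategic school's false negative rate. -/
noncomputable def FNR_s (p q : ℝ) : ℝ := (1 - q) * (1 - 2 * p) / (q - p)

/-- For noisy grades (q < 1): the FPR ratio of strategic to revealing is at
least 1 and increasing in q; the FNR ratio equals (1-2p)/(q-p), lies in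
[(1-2p)/(1-p), 1], and is decreasing in q. -/
theorem rate_ratios_noisy_grades (p q q' : ℝ) (hp0 : 0 < p) (hp : p < 1/2)
    (hq'1 : 1 - p ≤ q') (hq' : q' < q) (hq2 : q < 1) :
    (1 ≤ FPR_s p q / FPR_r p q ∧
      FPR_s p q' / FPR_r p q' ≤ FPR_s p q / FPR_r p q) ∧
    (FNR_s p q / FNR_r p q = (1 - 2 * p) / (q - p) ∧
      (1 - 2 * p) / (1 - p) ≤ FNR_s p q / FNR_r p q ∧
      FNR_s p q / FNR_r p q ≤ 1 ∧
      FNR_s p q / FNR_r p q ≤ FNR_s p q' / FNR_r p q') := by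
  have h1q : (0:ℝ) < 1 - q := by linarith
  have h1q' : (0:ℝ) < 1 - q' := by linarith
  have hpq : (0:ℝ) < q - p := by linarith
  have hpq' : (0:ℝ) < q' - p := by linarith
  have hq0 : (0:ℝ) < q := by linarith
  have hq0' : (0:ℝ) < q' := by linarith
  have hA : (0:ℝ) < p + q - 1 := by linarith
  have hA' : (0:ℝ) ≤ p + q' - 1 := by linarith
  have hfnr : FNR_s p q / FNR_r p q = (1 - 2 * p) / (q - p) := by
    unfold FNR_s FNR_r
    field_simp
  have hfnr' : FNR_s p q' / FNR_r p q' = (1 - 2 * p) / (q' - p) := by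
    unfold FNR_s FNR_r
    field_simp
  refine ⟨⟨?_, ?_⟩, hfnr, ?_, ?_, ?_⟩
  · unfold FPR_s FPR_r
    rw [le_div_iff₀ h1q]
    have : 0 ≤ q * (p + q - 1) / (q - p) := by positivity
    linarith
  · unfold FPR_s FPR_r
    rw [div_le_div_iff₀ h1q' h1q]
    have key : q' * (p + q' - 1) / (q' - p) ≤ q * (p + q - 1) / (q - p) := by
      rw [div_le_div_iff₀ hpq' hpq]
      nlinarith [mul_pos hpq hpq', mul_pos (sub_pos.mpr hq') (mul_pos hp0 (show (0:ℝ) < 1 - 2*p by linarith))]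
    have h1 : 0 ≤ q' * (p + q' - 1) / (q' - p) := by positivity
    nlinarith [mul_le_mul_of_nonneg_right key (le_of_lt h1q'),
      mul_le_mul_of_nonneg_left (show (1:ℝ) - q ≤ 1 - q' by linarith) h1]
  · rw [hfnr, div_le_div_iff₀ (by linarith) hpq]
    nlinarith
  · rw [hfnr, div_le_one hpq]
    linarith
  · rw [hfnr, hfnr', div_le_div_iff₀ hpq hpq']
    nlinarith
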